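/- Assume r ≥ 2. The elements r_0, r_1, ..., r_r of W satisfy the Coxeter relations of affine type A_{2r}^{(2)}: each r_i has order 2; the product r_0 r_1 has order 4; the product r_{r-1} r_r has order 4; r_i r_{i+1} has order 3 for every 1 ≤ i ≤ r-2; and r_i r_j = r_j r_i whenever 0 ≤ i < j ≤ r with j - i ≥ 2. -/

import Mathlib

noncomputable section

open CoxeterSystem
open Fin.NatCast

/-- The Coxeter matrix of the affine Weyl group of type `Ã_{2r}`:
vertices `0, …, 2r` arranged in a cycle mod `N = 2r+1`; `m i j = 3` if
`i - j ≡ ±1 (mod N)`, `m i j = 2` for other off-diagonal pairs. -/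
def affACoxeterMatrix (r : ℕ) : CoxeterMatrix (Fin (2 * r + 1)) where
  M i j := if i = j then 1 else if i = j + 1 ∨ j = i + 1 then 3 else 2
  isSymm := by
    apply Matrix.IsSymm.ext
    intro i j
    by_cases h : j = i
    · subst h; rfl
    · rw [if_neg h, if_neg (fun hh : i = j => h hh.symm)]
      exact if_congr or_comm rfl rfl
  diagonal i := if_pos rfl
  off_diagonal i j h := by
    rw [if_neg h]
    split <;> omega

/-- The affine Weyl group `W` of type `Ã_{2r}`, as the Coxeter group of the above matrix. -/
abbrev AffW (r : ℕ) : Type := (affACoxeterMatrix r).Group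

/-- The canonical Coxeter system on `AffW r`. -/
def affCS (r : ℕ) : CoxeterSystem (affACoxeterMatrix r) (AffW r) :=
  (affACoxeterMatrix r).toCoxeterSystem

/-- The simple reflection `s i` (index taken mod `2r+1`). -/
def sgen (r i : ℕ) : AffW r := (affCS r).simple ((i : ℕ) : Fin (2 * r + 1))

/-- The word in the simple reflections representing the generator `r_i` of the
relative Weyl group: `r_0 = s_0`, `r_i = s_i s_{2r+1-i}` for `1 ≤ i ≤ r-1`,
`r_r = s_r s_{r+1} s_r`. -/
def rword (r : ℕ) : ℕ → List (Fin (2 * r + 1)) := fun i =>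
  if i = 0 then [(0 : Fin (2 * r + 1))]
  else if i < r then [((i : ℕ) : Fin (2 * r + 1)), ((2 * r + 1 - i : ℕ) : Fin (2 * r + 1))]
  else [((r : ℕ) : Fin (2 * r + 1)), ((r + 1 : ℕ) : Fin (2 * r + 1)), ((r : ℕ) : Fin (2 * r + 1))]

/-- The element `r_i` of `W`. -/
def rgen (r i : ℕ) : AffW r := (affCS r).wordProd (rword r i)

/-- The list `[a, a+1, …, b]` (empty if `b < a`). -/
def ascSeq (a b : ℕ) : List ℕ := List.range' a (b + 1 - a)

/-- The list `[b, b-1, …, a]` (empty if `b < a`). -/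
def descSeq (a b : ℕ) : List ℕ := (List.range' a (b + 1 - a)).reverse

/-- The expansion, as a word in the simple reflections, of the block
`r_0 r_1 ⋯ r_{r-1} r_r r_{r-1} ⋯ r_k`. -/
def blockWord (r k : ℕ) : List (Fin (2 * r + 1)) :=
  ((ascSeq 0 r ++ descSeq k (r - 1)).map (rword r)).flatten

/-- The element `r_0 r_1 ⋯ r_{r-1} r_r r_{r-1} ⋯ r_k` of `W`. -/
def blockEl (r k : ℕ) : AffW r := (affCS r).wordProd (blockWord r k)

/-- The expansion, as a word in the simple reflections, of
`ϖ_k = (r_0 r_1 ⋯ r_{r-1} r_r r_{r-1} ⋯ r_k)^k`. -/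
def piWord (r k : ℕ) : List (Fin (2 * r + 1)) :=
  (List.replicate k (blockWord r k)).flatten

/-- The element `ϖ_k = (r_0 r_1 ⋯ r_{r-1} r_r r_{r-1} ⋯ r_k)^k` of `W`. -/
def piEl (r k : ℕ) : AffW r := (affCS r).wordProd (piWord r k)

/-- The expansion of the full block `r_0 r_1 ⋯ r_{r-1} r_r` as a word. -/
def fullBlockWord (r : ℕ) : List (Fin (2 * r + 1)) :=
  ((ascSeq 0 r).map (rword r)).flatten

/-- The element `r_0 r_1 ⋯ r_{r-1} r_r` of `W`. -/
def fullBlockEl (r : ℕ) : AffW r := (affCS r).wordProd (fullBlockWord r)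


namespace Stmt10

variable {G : Type*} [Group G]


theorem sqT {a : G} (h : a*a = 1) : ∀ x : G, a*(a*x) = x := by
  intro x; rw [← mul_assoc, h, one_mul]

theorem commT {a b : G} (h : a*b = b*a) : ∀ x : G, a*(b*x) = b*(a*x) := by
  intro x; rw [← mul_assoc, h, mul_assoc]

theorem braidT {a b : G} (h : a*b*a = b*a*b) : ∀ x : G, a*(b*(a*x)) = b*(a*(b*x)) := by
  intro x; rw [← mul_assoc, ← mul_assoc, h, mul_assoc, mul_assoc]

theorem comm_of_pow2 {a b : G} (ha : a*a = 1) (hb : b*b = 1) (h : (a*b)^2 = 1) :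
    a*b = b*a := by
  have h' : a*b*(a*b) = 1 := by rw [← sq]; exact h
  have hainv : a⁻¹ = a := inv_eq_of_mul_eq_one_right ha
  have hbinv : b⁻¹ = b := inv_eq_of_mul_eq_one_right hb
  have := eq_inv_of_mul_eq_one_left h'
  rw [mul_inv_rev, hainv, hbinv] at this
  exact this

theorem braid_of_pow3 {a b : G} (ha : a*a = 1) (hb : b*b = 1) (h : (a*b)^3 = 1) :
    a*b*a = b*a*b := by
  have h' : a*b*(a*b)*(a*b) = 1 := by
    have : (a*b)^3 = a*b*(a*b)*(a*b) := by
      rw [pow_succ, pow_succ, pow_one]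
    rw [← this]; exact h
  have hainv : a⁻¹ = a := inv_eq_of_mul_eq_one_right ha
  have hbinv : b⁻¹ = b := inv_eq_of_mul_eq_one_right hb
  have h2 : a*b*a = (b*(a*b))⁻¹ := by
    apply eq_inv_of_mul_eq_one_left
    calc a*b*a*(b*(a*b)) = a*b*(a*b)*(a*b) := by group
      _ = 1 := h'
  rw [mul_inv_rev, mul_inv_rev, hainv, hbinv] at h2
  rw [h2]

theorem pow_swap_eq_one {x y : G} {n : ℕ} (h : (y*x)^n = 1) : (x*y)^n = 1 := by
  have hs : SemiconjBy x ((y*x)^n) ((x*y)^n) := (SemiconjBy.pow_right (by simp [SemiconjBy, mul_assoc]) n)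
  have heq := hs.eq
  rw [h, mul_one] at heq
  have : (x*y)^n * x = 1 * x := by rw [← heq, one_mul]
  exact mul_right_cancel this

theorem sq_two {a b : G} (ha : a*a = 1) (hb : b*b = 1) (hab : a*b = b*a) :
    (a*b)^2 = 1 := by
  have Sa := sqT ha; have Sb := sqT hb; have Cab := commT hab
  have key : ∀ x : G, a*(b*(a*(b*(x)))) = x := by
    intro x
    calc a*(b*(a*(b*(x))))
      _ = a*(a*(b*(b*(x)))) := congrArg (fun z => a*z) ((Cab _).symm)
      _ = b*(b*(x)) := Sa _
      _ = x := Sb _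
  calc (a*b)^2 = (a*b)^2 * 1 := (mul_one _).symm
    _ = a*(b*(a*(b*((1:G))))) := by simp only [pow_succ, pow_zero, one_mul, mul_assoc]
    _ = 1 := key 1

theorem sq_three {c d : G} (hc : c*c = 1) (hd : d*d = 1) :
    (c*(d*c))^2 = 1 := by
  have Sc := sqT hc; have Sd := sqT hd
  have key : ∀ x : G, c*(d*(c*(c*(d*(c*(x)))))) = x := by
    intro x
    calc c*(d*(c*(c*(d*(c*(x))))))
      _ = c*(d*(d*(c*(x)))) := congrArg (fun z => c*z) (congrArg (fun z => d*z) (Sc _))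
      _ = c*(c*(x)) := congrArg (fun z => c*z) (Sd _)
      _ = x := Sc _
  calc (c*(d*c))^2 = (c*(d*c))^2 * 1 := (mul_one _).symm
    _ = c*(d*(c*(c*(d*(c*((1:G))))))) := by simp only [pow_succ, pow_zero, one_mul, mul_assoc]
    _ = 1 := key 1

theorem ord4A {a b c : G} (ha : a*a = 1) (hb : b*b = 1) (hc : c*c = 1)
    (hab : a*b*a = b*a*b) (hac : a*c*a = c*a*c) (hbc : b*c = c*b) :
    (a*(b*c))^4 = 1 := by
  have Sa := sqT ha; have Sb := sqT hb; have Sc := sqT hc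
  have Rab := braidT hab; have Rac := braidT hac; have Cbc := commT hbc
  have key : ∀ x : G, a*(b*(c*(a*(b*(c*(a*(b*(c*(a*(b*(c*(x)))))))))))) = x := by
    intro x
    calc a*(b*(c*(a*(b*(c*(a*(b*(c*(a*(b*(c*(x))))))))))))
      _ = a*(b*(c*(a*(c*(b*(a*(b*(c*(a*(b*(c*(x)))))))))))) := congrArg (fun z => a*z) (congrArg (fun z => b*z) (congrArg (fun z => c*z) (congrArg (fun z => a*z) (Cbc _))))
      _ = a*(b*(a*(c*(a*(b*(a*(b*(c*(a*(b*(c*(x)))))))))))) := congrArg (fun z => a*z) (congrArg (fun z => b*z) ((Rac _).symm))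
      _ = a*(b*(a*(c*(a*(b*(a*(b*(c*(a*(c*(b*(x)))))))))))) := congrArg (fun z => a*z) (congrArg (fun z => b*z) (congrArg (fun z => a*z) (congrArg (fun z => c*z) (congrArg (fun z => a*z) (congrArg (fun z => b*z) (congrArg (fun z => a*z) (congrArg (fun z => b*z) (congrArg (fun z => c*z) (congrArg (fun z => a*z) (Cbc _))))))))))
      _ = a*(b*(a*(c*(a*(b*(a*(b*(a*(c*(a*(b*(x)))))))))))) := congrArg (fun z => a*z) (congrArg (fun z => b*z) (congrArg (fun z => a*z) (congrArg (fun z => c*z) (congrArg (fun z => a*z) (congrArg (fun z => b*z) (congrArg (fun z => a*z) (congrArg (fun z => b*z) ((Rac _).symm))))))))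
      _ = a*(b*(a*(c*(a*(a*(b*(a*(a*(c*(a*(b*(x)))))))))))) := congrArg (fun z => a*z) (congrArg (fun z => b*z) (congrArg (fun z => a*z) (congrArg (fun z => c*z) (congrArg (fun z => a*z) ((Rab _).symm)))))
      _ = a*(b*(a*(c*(b*(a*(a*(c*(a*(b*(x)))))))))) := congrArg (fun z => a*z) (congrArg (fun z => b*z) (congrArg (fun z => a*z) (congrArg (fun z => c*z) (Sa _))))
      _ = a*(b*(a*(c*(b*(c*(a*(b*(x)))))))) := congrArg (fun z => a*z) (congrArg (fun z => b*z) (congrArg (fun z => a*z) (congrArg (fun z => c*z) (congrArg (fun z => b*z) (Sa _)))))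
      _ = a*(b*(a*(c*(c*(b*(a*(b*(x)))))))) := congrArg (fun z => a*z) (congrArg (fun z => b*z) (congrArg (fun z => a*z) (congrArg (fun z => c*z) (Cbc _))))
      _ = a*(b*(a*(b*(a*(b*(x)))))) := congrArg (fun z => a*z) (congrArg (fun z => b*z) (congrArg (fun z => a*z) (Sc _)))
      _ = b*(a*(b*(b*(a*(b*(x)))))) := Rab _
      _ = b*(a*(a*(b*(x)))) := congrArg (fun z => b*z) (congrArg (fun z => a*z) (Sb _))
      _ = b*(b*(x)) := congrArg (fun z => b*z) (Sa _)
      _ = x := Sb _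
  calc (a*(b*c))^4 = (a*(b*c))^4 * 1 := (mul_one _).symm
    _ = a*(b*(c*(a*(b*(c*(a*(b*(c*(a*(b*(c*((1:G))))))))))))) := by simp only [pow_succ, pow_zero, one_mul, mul_assoc]
    _ = 1 := key 1

theorem ord3 {a b c d : G} (ha : a*a = 1) (hb : b*b = 1) (hc : c*c = 1) (hd : d*d = 1)
    (hac : a*c*a = c*a*c) (hbd : b*d*b = d*b*d)
    (hab : a*b = b*a) (had : a*d = d*a) (hbc : b*c = c*b) (hcd : c*d = d*c) :
    (a*(b*(c*d)))^3 = 1 := by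
  have Sa := sqT ha; have Sb := sqT hb; have Sc := sqT hc; have Sd := sqT hd
  have Rac := braidT hac; have Rbd := braidT hbd
  have Cab := commT hab; have Cad := commT had; have Cbc := commT hbc; have Ccd := commT hcd
  have key : ∀ x : G, a*(b*(c*(d*(a*(b*(c*(d*(a*(b*(c*(d*(x)))))))))))) = x := by
    intro x
    calc a*(b*(c*(d*(a*(b*(c*(d*(a*(b*(c*(d*(x))))))))))))
      _ = a*(c*(b*(d*(a*(b*(c*(d*(a*(b*(c*(d*(x)))))))))))) := congrArg (fun z => a*z) (Cbc _)
      _ = a*(c*(b*(a*(d*(b*(c*(d*(a*(b*(c*(d*(x)))))))))))) := congrArg (fun z => a*z) (congrArg (fun z => c*z) (congrArg (fun z => b*z) ((Cad _).symm)))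
      _ = a*(c*(a*(b*(d*(b*(c*(d*(a*(b*(c*(d*(x)))))))))))) := congrArg (fun z => a*z) (congrArg (fun z => c*z) ((Cab _).symm))
      _ = a*(c*(a*(b*(d*(c*(b*(d*(a*(b*(c*(d*(x)))))))))))) := congrArg (fun z => a*z) (congrArg (fun z => c*z) (congrArg (fun z => a*z) (congrArg (fun z => b*z) (congrArg (fun z => d*z) (Cbc _)))))
      _ = a*(c*(a*(b*(c*(d*(b*(d*(a*(b*(c*(d*(x)))))))))))) := congrArg (fun z => a*z) (congrArg (fun z => c*z) (congrArg (fun z => a*z) (congrArg (fun z => b*z) ((Ccd _).symm))))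
      _ = a*(c*(a*(c*(b*(d*(b*(d*(a*(b*(c*(d*(x)))))))))))) := congrArg (fun z => a*z) (congrArg (fun z => c*z) (congrArg (fun z => a*z) (Cbc _)))
      _ = a*(c*(a*(c*(b*(d*(b*(a*(d*(b*(c*(d*(x)))))))))))) := congrArg (fun z => a*z) (congrArg (fun z => c*z) (congrArg (fun z => a*z) (congrArg (fun z => c*z) (congrArg (fun z => b*z) (congrArg (fun z => d*z) (congrArg (fun z => b*z) ((Cad _).symm)))))))
      _ = a*(c*(a*(c*(b*(d*(a*(b*(d*(b*(c*(d*(x)))))))))))) := congrArg (fun z => a*z) (congrArg (fun z => c*z) (congrArg (fun z => a*z) (congrArg (fun z => c*z) (congrArg (fun z => b*z) (congrArg (fun z => d*z) ((Cab _).symm))))))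
      _ = a*(c*(a*(c*(b*(a*(d*(b*(d*(b*(c*(d*(x)))))))))))) := congrArg (fun z => a*z) (congrArg (fun z => c*z) (congrArg (fun z => a*z) (congrArg (fun z => c*z) (congrArg (fun z => b*z) ((Cad _).symm)))))
      _ = a*(c*(a*(c*(a*(b*(d*(b*(d*(b*(c*(d*(x)))))))))))) := congrArg (fun z => a*z) (congrArg (fun z => c*z) (congrArg (fun z => a*z) (congrArg (fun z => c*z) ((Cab _).symm))))
      _ = a*(c*(a*(c*(a*(b*(d*(b*(d*(c*(b*(d*(x)))))))))))) := congrArg (fun z => a*z) (congrArg (fun z => c*z) (congrArg (fun z => a*z) (congrArg (fun z => c*z) (congrArg (fun z => a*z) (congrArg (fun z => b*z) (congrArg (fun z => d*z) (congrArg (fun z => b*z) (congrArg (fun z => d*z) (Cbc _)))))))))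
      _ = a*(c*(a*(c*(a*(b*(d*(b*(c*(d*(b*(d*(x)))))))))))) := congrArg (fun z => a*z) (congrArg (fun z => c*z) (congrArg (fun z => a*z) (congrArg (fun z => c*z) (congrArg (fun z => a*z) (congrArg (fun z => b*z) (congrArg (fun z => d*z) (congrArg (fun z => b*z) ((Ccd _).symm))))))))
      _ = a*(c*(a*(c*(a*(b*(d*(c*(b*(d*(b*(d*(x)))))))))))) := congrArg (fun z => a*z) (congrArg (fun z => c*z) (congrArg (fun z => a*z) (congrArg (fun z => c*z) (congrArg (fun z => a*z) (congrArg (fun z => b*z) (congrArg (fun z => d*z) (Cbc _)))))))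
      _ = a*(c*(a*(c*(a*(b*(c*(d*(b*(d*(b*(d*(x)))))))))))) := congrArg (fun z => a*z) (congrArg (fun z => c*z) (congrArg (fun z => a*z) (congrArg (fun z => c*z) (congrArg (fun z => a*z) (congrArg (fun z => b*z) ((Ccd _).symm))))))
      _ = a*(c*(a*(c*(a*(c*(b*(d*(b*(d*(b*(d*(x)))))))))))) := congrArg (fun z => a*z) (congrArg (fun z => c*z) (congrArg (fun z => a*z) (congrArg (fun z => c*z) (congrArg (fun z => a*z) (Cbc _)))))
      _ = c*(a*(c*(c*(a*(c*(b*(d*(b*(d*(b*(d*(x)))))))))))) := Rac _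
      _ = c*(a*(a*(c*(b*(d*(b*(d*(b*(d*(x)))))))))) := congrArg (fun z => c*z) (congrArg (fun z => a*z) (Sc _))
      _ = c*(c*(b*(d*(b*(d*(b*(d*(x)))))))) := congrArg (fun z => c*z) (Sa _)
      _ = b*(d*(b*(d*(b*(d*(x)))))) := Sc _
      _ = d*(b*(d*(d*(b*(d*(x)))))) := Rbd _
      _ = d*(b*(b*(d*(x)))) := congrArg (fun z => d*z) (congrArg (fun z => b*z) (Sd _))
      _ = d*(d*(x)) := congrArg (fun z => d*z) (Sb _)
      _ = x := Sd _
  calc (a*(b*(c*d)))^3 = (a*(b*(c*d)))^3 * 1 := (mul_one _).symm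
    _ = a*(b*(c*(d*(a*(b*(c*(d*(a*(b*(c*(d*((1:G))))))))))))) := by simp only [pow_succ, pow_zero, one_mul, mul_assoc]
    _ = 1 := key 1

theorem braid_ea {a c d : G} (ha : a*a = 1) (hc : c*c = 1) (hd : d*d = 1)
    (hac : a*c*a = c*a*c) (hcd : c*d*c = d*c*d) (had : a*d = d*a) :
    ((c*(d*c))*a)^3 = 1 := by
  have Sa := sqT ha; have Sc := sqT hc; have Sd := sqT hd
  have Rac := braidT hac; have Rcd := braidT hcd; have Cad := commT had
  have key : ∀ x : G, c*(d*(c*(a*(c*(d*(c*(a*(c*(d*(c*(a*(x)))))))))))) = x := by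
    intro x
    calc c*(d*(c*(a*(c*(d*(c*(a*(c*(d*(c*(a*(x))))))))))))
      _ = c*(d*(a*(c*(a*(d*(c*(a*(c*(d*(c*(a*(x)))))))))))) := congrArg (fun z => c*z) (congrArg (fun z => d*z) ((Rac _).symm))
      _ = c*(d*(a*(c*(d*(a*(c*(a*(c*(d*(c*(a*(x)))))))))))) := congrArg (fun z => c*z) (congrArg (fun z => d*z) (congrArg (fun z => a*z) (congrArg (fun z => c*z) (Cad _))))
      _ = c*(d*(a*(c*(d*(a*(a*(c*(a*(d*(c*(a*(x)))))))))))) := congrArg (fun z => c*z) (congrArg (fun z => d*z) (congrArg (fun z => a*z) (congrArg (fun z => c*z) (congrArg (fun z => d*z) (congrArg (fun z => a*z) ((Rac _).symm))))))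
      _ = c*(d*(a*(c*(d*(c*(a*(d*(c*(a*(x)))))))))) := congrArg (fun z => c*z) (congrArg (fun z => d*z) (congrArg (fun z => a*z) (congrArg (fun z => c*z) (congrArg (fun z => d*z) (Sa _)))))
      _ = c*(d*(a*(d*(c*(d*(a*(d*(c*(a*(x)))))))))) := congrArg (fun z => c*z) (congrArg (fun z => d*z) (congrArg (fun z => a*z) (Rcd _)))
      _ = c*(d*(d*(a*(c*(d*(a*(d*(c*(a*(x)))))))))) := congrArg (fun z => c*z) (congrArg (fun z => d*z) (Cad _))
      _ = c*(a*(c*(d*(a*(d*(c*(a*(x)))))))) := congrArg (fun z => c*z) (Sd _)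
      _ = c*(a*(c*(d*(d*(a*(c*(a*(x)))))))) := congrArg (fun z => c*z) (congrArg (fun z => a*z) (congrArg (fun z => c*z) (congrArg (fun z => d*z) (Cad _))))
      _ = c*(a*(c*(a*(c*(a*(x)))))) := congrArg (fun z => c*z) (congrArg (fun z => a*z) (congrArg (fun z => c*z) (Sd _)))
      _ = a*(c*(a*(a*(c*(a*(x)))))) := (Rac _).symm
      _ = a*(c*(c*(a*(x)))) := congrArg (fun z => a*z) (congrArg (fun z => c*z) (Sa _))
      _ = a*(a*(x)) := congrArg (fun z => a*z) (Sc _)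
      _ = x := Sa _
  calc ((c*(d*c))*a)^3 = ((c*(d*c))*a)^3 * 1 := (mul_one _).symm
    _ = c*(d*(c*(a*(c*(d*(c*(a*(c*(d*(c*(a*((1:G))))))))))))) := by simp only [pow_succ, pow_zero, one_mul, mul_assoc]
    _ = 1 := key 1

theorem braid_eb {b c d : G} (hb : b*b = 1) (hc : c*c = 1) (hd : d*d = 1)
    (hbd : b*d*b = d*b*d) (hcd : c*d*c = d*c*d) (hbc : b*c = c*b) :
    ((c*(d*c))*b)^3 = 1 := by
  have Sb := sqT hb; have Sc := sqT hc; have Sd := sqT hd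
  have Rbd := braidT hbd; have Rcd := braidT hcd; have Cbc := commT hbc
  have key : ∀ x : G, c*(d*(c*(b*(c*(d*(c*(b*(c*(d*(c*(b*(x)))))))))))) = x := by
    intro x
    calc c*(d*(c*(b*(c*(d*(c*(b*(c*(d*(c*(b*(x))))))))))))
      _ = c*(d*(b*(c*(c*(d*(c*(b*(c*(d*(c*(b*(x)))))))))))) := congrArg (fun z => c*z) (congrArg (fun z => d*z) ((Cbc _).symm))
      _ = c*(d*(b*(d*(c*(b*(c*(d*(c*(b*(x)))))))))) := congrArg (fun z => c*z) (congrArg (fun z => d*z) (congrArg (fun z => b*z) (Sc _)))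
      _ = c*(b*(d*(b*(c*(b*(c*(d*(c*(b*(x)))))))))) := congrArg (fun z => c*z) ((Rbd _).symm)
      _ = b*(c*(d*(b*(c*(b*(c*(d*(c*(b*(x)))))))))) := (Cbc _).symm
      _ = b*(c*(d*(c*(b*(b*(c*(d*(c*(b*(x)))))))))) := congrArg (fun z => b*z) (congrArg (fun z => c*z) (congrArg (fun z => d*z) (Cbc _)))
      _ = b*(c*(d*(c*(c*(d*(c*(b*(x)))))))) := congrArg (fun z => b*z) (congrArg (fun z => c*z) (congrArg (fun z => d*z) (congrArg (fun z => c*z) (Sb _))))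
      _ = b*(c*(d*(d*(c*(b*(x)))))) := congrArg (fun z => b*z) (congrArg (fun z => c*z) (congrArg (fun z => d*z) (Sc _)))
      _ = b*(c*(c*(b*(x)))) := congrArg (fun z => b*z) (congrArg (fun z => c*z) (Sd _))
      _ = b*(b*(x)) := congrArg (fun z => b*z) (Sc _)
      _ = x := Sb _
  calc ((c*(d*c))*b)^3 = ((c*(d*c))*b)^3 * 1 := (mul_one _).symm
    _ = c*(d*(c*(b*(c*(d*(c*(b*(c*(d*(c*(b*((1:G))))))))))))) := by simp only [pow_succ, pow_zero, one_mul, mul_assoc]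
    _ = 1 := key 1

theorem ord4B {a b c d : G} (ha : a*a = 1) (hb : b*b = 1) (hc : c*c = 1) (hd : d*d = 1)
    (hac : a*c*a = c*a*c) (hbd : b*d*b = d*b*d) (hcd : c*d*c = d*c*d)
    (hab : a*b = b*a) (had : a*d = d*a) (hbc : b*c = c*b) :
    (a*(b*(c*(d*c))))^4 = 1 := by
  set e := c*(d*c) with he_def
  have he : e*e = 1 := by
    have := sq_three hc hd
    rwa [pow_two] at this
  have heae : e*a*e = a*e*a := braid_of_pow3 he ha (braid_ea ha hc hd hac hcd had)
  have hebe : e*b*e = b*e*b := braid_of_pow3 he hb (braid_eb hb hc hd hbd hcd hbc)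
  have h1 : (e*(a*b))^4 = 1 := ord4A he ha hb heae hebe hab
  have h2 : ((a*b)*e)^4 = 1 := pow_swap_eq_one h1
  calc (a*(b*e))^4 = ((a*b)*e)^4 := by rw [mul_assoc]
    _ = 1 := h2

end Stmt10

namespace Stmt10

open Equiv CoxeterSystem

/-! ### Arithmetic helpers -/

lemma succ_mod {n : ℕ} (q : ℕ) (h : q < n) :
    (q + 1) % n = if q + 1 = n then 0 else q + 1 := by
  split_ifs with h'
  · rw [h', Nat.mod_self]
  · exact Nat.mod_eq_of_lt (by omega)

lemma mod2N {n : ℕ} (a : ℕ) (_hn : 0 < n) (h : a < 2 * n) :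
    a % n = if a < n then a else a - n := by
  split_ifs with h'
  · exact Nat.mod_eq_of_lt h'
  · rw [Nat.mod_eq_sub_mod (by omega), Nat.mod_eq_of_lt (by omega)]

variable {r : ℕ}

lemma cast_eq (u v : ℕ) (hu : u < 2 * (2*r+1)) (hv : v < 2 * (2*r+1))
    (h : u = v ∨ u + (2*r+1) = v ∨ v + (2*r+1) = u) :
    ((u : ℕ) : Fin (2*r+1)) = ((v : ℕ) : Fin (2*r+1)) := by
  rw [Fin.ext_iff, Fin.val_natCast, Fin.val_natCast, mod2N u (by omega) hu,
    mod2N v (by omega) hv]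
  rcases h with h|h|h <;> split_ifs <;> omega

lemma cast_ne (u v : ℕ) (hu : u < 2 * (2*r+1)) (hv : v < 2 * (2*r+1))
    (h : ¬ (u = v ∨ u + (2*r+1) = v ∨ v + (2*r+1) = u)) :
    ((u : ℕ) : Fin (2*r+1)) ≠ ((v : ℕ) : Fin (2*r+1)) := by
  intro hc
  apply h
  have hval := congrArg Fin.val hc
  rw [Fin.val_natCast, Fin.val_natCast, mod2N u (by omega) hu, mod2N v (by omega) hv] at hval
  split_ifs at hval <;> omega

lemma cast_succ_fin (q : ℕ) : ((q + 1 : ℕ) : Fin (2*r+1)) = ((q : ℕ) : Fin (2*r+1)) + 1 := by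
  push_cast
  ring

lemma fin_val_one (hr : 1 ≤ r) : (1 : Fin (2*r+1)).val = 1 := by
  rw [show (1 : Fin (2*r+1)) = ((1 : ℕ) : Fin (2*r+1)) from (Nat.cast_one).symm,
    Fin.val_natCast, Nat.mod_eq_of_lt (by omega)]

lemma add_one_ne (hr : 1 ≤ r) (a : Fin (2*r+1)) : a + 1 ≠ a := by
  intro h
  have h2 := congrArg Fin.val h
  rw [Fin.val_add, fin_val_one hr, succ_mod a.val a.isLt] at h2
  have := a.isLt
  split_ifs at h2 <;> omega

lemma add_two_ne (hr : 1 ≤ r) (a : Fin (2*r+1)) : a + 1 + 1 ≠ a := by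
  intro h
  have h2 := congrArg Fin.val h
  rw [Fin.val_add, Fin.val_add, fin_val_one hr, succ_mod a.val a.isLt] at h2
  have ha := a.isLt
  split_ifs at h2 with h3
  · rw [Nat.zero_add, Nat.mod_eq_of_lt (by omega)] at h2; omega
  · rw [succ_mod _ (by omega)] at h2
    split_ifs at h2 <;> omega

/-! ### Simple reflections and the generators -/

/-- Abbreviation for the simple reflections, indexed by naturals. -/
def SS (r p : ℕ) : AffW r := (affCS r).simple ((p : ℕ) : Fin (2*r+1))

lemma SS_sq (p : ℕ) : SS r p * SS r p = 1 := (affCS r).simple_mul_simple_self _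

lemma M_eval (p q : ℕ) (hp : p < 2*r+1) (hq : q < 2*r+1) :
    (affACoxeterMatrix r).M ((p : ℕ) : Fin (2*r+1)) ((q : ℕ) : Fin (2*r+1)) =
      if p = q then 1 else
        if p = (q+1) % (2*r+1) ∨ q = (p+1) % (2*r+1) then 3 else 2 := by
  show (if ((p : ℕ) : Fin (2*r+1)) = ((q : ℕ) : Fin (2*r+1)) then 1 else
      if ((p : ℕ) : Fin (2*r+1)) = ((q : ℕ) : Fin (2*r+1)) + 1 ∨
        ((q : ℕ) : Fin (2*r+1)) = ((p : ℕ) : Fin (2*r+1)) + 1 then 3 else 2) = _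
  have e0 : (((p : ℕ) : Fin (2*r+1)) = ((q : ℕ) : Fin (2*r+1))) = (p = q) := by
    rw [Fin.ext_iff, Fin.val_natCast, Fin.val_natCast, Nat.mod_eq_of_lt hp, Nat.mod_eq_of_lt hq]
  have e1 : (((p : ℕ) : Fin (2*r+1)) = ((q : ℕ) : Fin (2*r+1)) + 1) = (p = (q+1) % (2*r+1)) := by
    rw [← cast_succ_fin, Fin.ext_iff, Fin.val_natCast, Fin.val_natCast, Nat.mod_eq_of_lt hp]
  have e2 : (((q : ℕ) : Fin (2*r+1)) = ((p : ℕ) : Fin (2*r+1)) + 1) = (q = (p+1) % (2*r+1)) := by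
    rw [← cast_succ_fin, Fin.ext_iff, Fin.val_natCast, Fin.val_natCast, Nat.mod_eq_of_lt hq]
  simp only [e0, e1, e2]

lemma braid_s (hr : 1 ≤ r) (p q : ℕ) (hp : p < 2*r+1) (hq : q < 2*r+1)
    (h : p + 1 = q ∨ q + 1 = p ∨ (p = 0 ∧ q = 2*r) ∨ (q = 0 ∧ p = 2*r)) :
    SS r p * SS r q * SS r p = SS r q * SS r p * SS r q := by
  apply braid_of_pow3 (SS_sq p) (SS_sq q)
  have hpow := (affCS r).simple_mul_simple_pow ((p : ℕ) : Fin (2*r+1)) ((q : ℕ) : Fin (2*r+1))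
  rw [M_eval p q hp hq] at hpow
  rw [if_neg (by rcases h with h|h|⟨h1,h2⟩|⟨h1,h2⟩ <;> omega : ¬ p = q)] at hpow
  rw [if_pos] at hpow
  · exact hpow
  · rw [succ_mod q hq, succ_mod p hp]
    split_ifs <;> rcases h with h|h|⟨h1,h2⟩|⟨h1,h2⟩ <;> omega

lemma comm_s (p q : ℕ) (hp : p < 2*r+1) (hq : q < 2*r+1)
    (h : ¬(p = q ∨ p + 1 = q ∨ q + 1 = p ∨ (p = 0 ∧ q = 2*r) ∨ (q = 0 ∧ p = 2*r))) :
    SS r p * SS r q = SS r q * SS r p := by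
  apply comm_of_pow2 (SS_sq p) (SS_sq q)
  have hpow := (affCS r).simple_mul_simple_pow ((p : ℕ) : Fin (2*r+1)) ((q : ℕ) : Fin (2*r+1))
  rw [M_eval p q hp hq] at hpow
  rw [if_neg (fun hpq => h (Or.inl hpq))] at hpow
  rw [if_neg] at hpow
  · exact hpow
  · rw [succ_mod q hq, succ_mod p hp]
    rintro (hc | hc)
    · split_ifs at hc with hq1
      · exact h (Or.inr (Or.inr (Or.inr (Or.inl ⟨hc, by omega⟩))))
      · exact h (Or.inr (Or.inr (Or.inl hc.symm)))
    · split_ifs at hc with hp1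
      · exact h (Or.inr (Or.inr (Or.inr (Or.inr ⟨hc, by omega⟩))))
      · exact h (Or.inr (Or.inl hc.symm))

lemma comm_s' (p q : ℕ) (hp : p < 2*r+1) (hq : q < 2*r+1)
    (h : ¬(p = q ∨ p + 1 = q ∨ q + 1 = p ∨ (p = 0 ∧ q = 2*r) ∨ (q = 0 ∧ p = 2*r))) :
    Commute (SS r p) (SS r q) := comm_s p q hp hq h

/-! ### Unfolding `rgen` -/

lemma rgen_zero : rgen r 0 = SS r 0 := by
  simp [rgen, rword, SS, CoxeterSystem.wordProd_cons, CoxeterSystem.wordProd_nil]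

lemma rgen_mid {i : ℕ} (h0 : i ≠ 0) (hir : i < r) :
    rgen r i = SS r i * SS r (2*r+1-i) := by
  rw [rgen, rword]
  simp only [if_neg h0, if_pos hir]
  simp [SS, CoxeterSystem.wordProd_cons, CoxeterSystem.wordProd_nil, mul_assoc]

lemma rgen_top (h0 : r ≠ 0) : rgen r r = SS r r * (SS r (r+1) * SS r r) := by
  rw [rgen, rword]
  simp only [if_neg h0, if_neg (lt_irrefl r)]
  simp [SS, CoxeterSystem.wordProd_cons, CoxeterSystem.wordProd_nil, mul_assoc]

/-! ### The permutation representation -/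

/-- The map sending the `i`-th simple reflection to the transposition `(i, i+1)`. -/
def permF (r : ℕ) : Fin (2*r+1) → Equiv.Perm (Fin (2*r+1)) := fun i => Equiv.swap i (i+1)

lemma swap_braid {α : Type*} [DecidableEq α] {x y z : α}
    (hxy : x ≠ y) (hyz : y ≠ z) (hxz : x ≠ z) :
    (Equiv.swap x y * Equiv.swap y z) ^ 3 = 1 := by
  have hs : Equiv.swap x y * Equiv.swap y z * Equiv.swap x y = Equiv.swap x z := by
    have h := Equiv.swap_apply_apply (Equiv.swap x y) y z
    rw [Equiv.swap_apply_right, Equiv.swap_apply_of_ne_of_ne (Ne.symm hxz) (Ne.symm hyz),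
      Equiv.swap_inv] at h
    exact h.symm
  have ht : Equiv.swap y z * Equiv.swap x y * Equiv.swap y z = Equiv.swap x z := by
    have h := Equiv.swap_apply_apply (Equiv.swap y z) x y
    rw [Equiv.swap_apply_left, Equiv.swap_apply_of_ne_of_ne hxy hxz, Equiv.swap_inv] at h
    exact h.symm
  calc (Equiv.swap x y * Equiv.swap y z) ^ 3
      = (Equiv.swap x y * Equiv.swap y z * Equiv.swap x y) *
        (Equiv.swap y z * Equiv.swap x y * Equiv.swap y z) := by
          simp only [pow_succ, pow_zero, one_mul, mul_assoc]
    _ = 1 := by rw [hs, ht, Equiv.swap_mul_self]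

lemma swap_comm_disj {α : Type*} [DecidableEq α] {x y u v : α}
    (hxu : x ≠ u) (hxv : x ≠ v) (hyu : y ≠ u) (hyv : y ≠ v) :
    Equiv.swap x y * Equiv.swap u v = Equiv.swap u v * Equiv.swap x y := by
  have h := Equiv.swap_apply_apply (Equiv.swap x y) u v
  rw [Equiv.swap_apply_of_ne_of_ne (Ne.symm hxu) (Ne.symm hyu),
    Equiv.swap_apply_of_ne_of_ne (Ne.symm hxv) (Ne.symm hyv), Equiv.swap_inv] at h
  calc Equiv.swap x y * Equiv.swap u v
      = (Equiv.swap x y * Equiv.swap u v * Equiv.swap x y) * Equiv.swap x y := by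
        rw [mul_assoc (Equiv.swap x y * Equiv.swap u v), Equiv.swap_mul_self, mul_one]
    _ = Equiv.swap u v * Equiv.swap x y := by rw [← h]

lemma liftable (hr : 1 ≤ r) : (affACoxeterMatrix r).IsLiftable (permF r) := by
  intro i j
  by_cases hij : i = j
  · subst hij
    rw [(affACoxeterMatrix r).diagonal i, pow_one, permF, Equiv.swap_mul_self]
  · have hMne : (affACoxeterMatrix r).M i j =
        if i = j + 1 ∨ j = i + 1 then 3 else 2 := by
      show (if i = j then 1 else if i = j + 1 ∨ j = i + 1 then 3 else 2) = _
      rw [if_neg hij]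
    by_cases hadj : i = j + 1 ∨ j = i + 1
    · rw [hMne, if_pos hadj]
      rcases hadj with h1 | h1
      · subst h1
        apply pow_swap_eq_one (x := permF r (j+1)) (y := permF r j)
        show (Equiv.swap j (j+1) * Equiv.swap (j+1) (j+1+1)) ^ 3 = 1
        exact swap_braid (Ne.symm (add_one_ne hr j)) (Ne.symm (add_one_ne hr (j+1)))
          (Ne.symm (add_two_ne hr j))
      · subst h1
        show (Equiv.swap i (i+1) * Equiv.swap (i+1) (i+1+1)) ^ 3 = 1
        exact swap_braid (Ne.symm (add_one_ne hr i)) (Ne.symm (add_one_ne hr (i+1)))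
          (Ne.symm (add_two_ne hr i))
    · rw [hMne, if_neg hadj]
      push_neg at hadj
      apply sq_two (Equiv.swap_mul_self _ _) (Equiv.swap_mul_self _ _)
      apply swap_comm_disj hij hadj.1
      · intro h; exact hadj.2 (by rw [h])
      · intro h; exact hij (add_right_cancel h)

end Stmt10
namespace Stmt10

open Equiv CoxeterSystem

variable {r : ℕ}

/-- The homomorphism from `AffW r` to the permutations of `Fin (2r+1)`. -/
def phi (r : ℕ) (hr1 : 1 ≤ r) : AffW r →* Equiv.Perm (Fin (2*r+1)) :=
  (affCS r).lift ⟨permF r, liftable hr1⟩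

lemma phi_S (hr1 : 1 ≤ r) (p : ℕ) :
    phi r hr1 (SS r p) =
      Equiv.swap ((p : ℕ) : Fin (2*r+1)) ((p+1 : ℕ) : Fin (2*r+1)) := by
  rw [phi, SS, CoxeterSystem.lift_apply_simple, permF, cast_succ_fin]

lemma ne_one_of_apply (hr1 : 1 ≤ r) (x : AffW r) (a : Fin (2*r+1))
    (h : phi r hr1 x a ≠ a) : x ≠ 1 := by
  intro hc
  exact h (by rw [hc, map_one, Equiv.Perm.one_apply])

lemma sq_ne_one_of_apply (hr1 : 1 ≤ r) (x : AffW r) (a : Fin (2*r+1))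
    (h : phi r hr1 x (phi r hr1 x a) ≠ a) : x^2 ≠ 1 := by
  intro hc
  apply h
  have h2 : (phi r hr1 x)^2 = 1 := by rw [← map_pow, hc, map_one]
  rw [← Equiv.Perm.mul_apply, ← pow_two, h2, Equiv.Perm.one_apply]

lemma orderOf_eq_four {H : Type*} [Monoid H] {x : H} (h4 : x^4 = 1) (h2 : x^2 ≠ 1) :
    orderOf x = 4 := by
  have hd : orderOf x ∣ 4 := orderOf_dvd_of_pow_eq_one h4
  rw [show (4:ℕ) = 2^2 from rfl] at hd
  obtain ⟨i, hi, hdi⟩ := (Nat.dvd_prime_pow Nat.prime_two).mp hd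
  interval_cases i
  · exact absurd (orderOf_dvd_iff_pow_eq_one.mp (by rw [hdi]; exact one_dvd 2)) h2
  · exact absurd (orderOf_dvd_iff_pow_eq_one.mp (by rw [hdi]; norm_num)) h2
  · exact hdi.trans (by norm_num)

end Stmt10

open Stmt10 in
set_option maxHeartbeats 1000000 in
/-- For `r ≥ 2`, the elements `r_0, r_1, …, r_r` of `W` satisfy the Coxeter
relations of affine type `A_{2r}^{(2)}`: each `r_i` has order 2; `r_0 r_1` has order 4;
`r_{r-1} r_r` has order 4; `r_i r_{i+1}` has order 3 for `1 ≤ i ≤ r-2`;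
and `r_i r_j = r_j r_i` whenever `0 ≤ i < j ≤ r` with `j - i ≥ 2`. -/
theorem statement10 (r : ℕ) (hr : 2 ≤ r) :
    (∀ i, i ≤ r → orderOf (rgen r i) = 2) ∧
      orderOf (rgen r 0 * rgen r 1) = 4 ∧
      orderOf (rgen r (r - 1) * rgen r r) = 4 ∧
      (∀ i, 1 ≤ i → i ≤ r - 2 → orderOf (rgen r i * rgen r (i + 1)) = 3) ∧
      (∀ i j, i < j → j ≤ r → 2 ≤ j - i → rgen r i * rgen r j = rgen r j * rgen r i) := by
  have hr1 : 1 ≤ r := by omega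
  haveI : Fact (Nat.Prime 2) := ⟨Nat.prime_two⟩
  haveI : Fact (Nat.Prime 3) := ⟨Nat.prime_three⟩
  refine ⟨?_, ?_, ?_, ?_, ?_⟩
  -- Part 1 : each `r_i` has order 2
  · intro i hi
    by_cases h0 : i = 0
    · subst h0
      rw [rgen_zero]
      apply orderOf_eq_prime
      · rw [pow_two]; exact SS_sq 0
      · apply ne_one_of_apply hr1 _ ((0 : ℕ) : Fin (2*r+1))
        rw [phi_S hr1 0, Equiv.swap_apply_left]
        exact cast_ne (0+1) 0 (by omega) (by omega) (by omega)
    · by_cases hir : i = r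
      · rw [hir, rgen_top (by omega)]
        apply orderOf_eq_prime
        · exact sq_three (SS_sq r) (SS_sq (r+1))
        · apply ne_one_of_apply hr1 _ ((r : ℕ) : Fin (2*r+1))
          rw [map_mul, map_mul, phi_S hr1 r, phi_S hr1 (r+1)]
          rw [cast_eq (r+1+1) (r+2) (by omega) (by omega) (by omega)]
          simp only [Equiv.Perm.mul_apply]
          rw [Equiv.swap_apply_left]
          rw [show (((r+1 : ℕ) : Fin (2*r+1)) : Fin (2*r+1)) = ((r+1 : ℕ) : Fin (2*r+1)) from rfl]
          rw [Equiv.swap_apply_left]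
          rw [Equiv.swap_apply_of_ne_of_ne
            (cast_ne (r+2) r (by omega) (by omega) (by omega))
            (cast_ne (r+2) (r+1) (by omega) (by omega) (by omega))]
          exact cast_ne (r+2) r (by omega) (by omega) (by omega)
      · -- middle case
        rw [rgen_mid h0 (by omega)]
        apply orderOf_eq_prime
        · exact sq_two (SS_sq i) (SS_sq (2*r+1-i))
            (comm_s i (2*r+1-i) (by omega) (by omega) (by omega))
        · apply ne_one_of_apply hr1 _ ((i : ℕ) : Fin (2*r+1))
          rw [map_mul, phi_S hr1 i, phi_S hr1 (2*r+1-i), Equiv.Perm.mul_apply]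
          rw [Equiv.swap_apply_of_ne_of_ne
            (cast_ne i (2*r+1-i) (by omega) (by omega) (by omega))
            (cast_ne i (2*r+1-i+1) (by omega) (by omega) (by omega))]
          rw [Equiv.swap_apply_left]
          exact cast_ne (i+1) i (by omega) (by omega) (by omega)
  -- Part 2 : `r_0 r_1` has order 4
  · have e1 : rgen r 1 = SS r 1 * SS r (2*r) := by
      rw [rgen_mid one_ne_zero (by omega), show 2*r+1-1 = 2*r from by omega]
    apply orderOf_eq_four
    · rw [rgen_zero, e1]
      exact ord4A (SS_sq 0) (SS_sq 1) (SS_sq (2*r))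
        (braid_s hr1 0 1 (by omega) (by omega) (by omega))
        (braid_s hr1 0 (2*r) (by omega) (by omega) (by omega))
        (comm_s 1 (2*r) (by omega) (by omega) (by omega))
    · apply sq_ne_one_of_apply hr1 _ ((0 : ℕ) : Fin (2*r+1))
      rw [rgen_zero, e1, map_mul, map_mul, phi_S hr1 0, phi_S hr1 1, phi_S hr1 (2*r)]
      rw [cast_eq (2*r+1) 0 (by omega) (by omega) (by omega)]
      simp only [Equiv.Perm.mul_apply]
      have c1 : Equiv.swap ((2*r : ℕ) : Fin (2*r+1)) ((0 : ℕ) : Fin (2*r+1))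
          ((0 : ℕ) : Fin (2*r+1)) = ((2*r : ℕ) : Fin (2*r+1)) := Equiv.swap_apply_right _ _
      rw [c1]
      rw [Equiv.swap_apply_of_ne_of_ne
        (cast_ne (2*r) 1 (by omega) (by omega) (by omega))
        (cast_ne (2*r) (1+1) (by omega) (by omega) (by omega))]
      rw [Equiv.swap_apply_of_ne_of_ne
        (cast_ne (2*r) 0 (by omega) (by omega) (by omega))
        (cast_ne (2*r) (0+1) (by omega) (by omega) (by omega))]
      rw [Equiv.swap_apply_left]
      rw [Equiv.swap_apply_of_ne_of_ne
        (cast_ne 0 1 (by omega) (by omega) (by omega))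
        (cast_ne 0 (1+1) (by omega) (by omega) (by omega))]
      rw [Equiv.swap_apply_left]
      exact cast_ne (0+1) 0 (by omega) (by omega) (by omega)
  -- Part 3 : `r_{r-1} r_r` has order 4
  · have e1 : rgen r (r-1) = SS r (r-1) * SS r (r+2) := by
      rw [rgen_mid (by omega) (by omega), show 2*r+1-(r-1) = r+2 from by omega]
    apply orderOf_eq_four
    · rw [e1, rgen_top (by omega), mul_assoc]
      exact ord4B (SS_sq (r-1)) (SS_sq (r+2)) (SS_sq r) (SS_sq (r+1))
        (braid_s hr1 (r-1) r (by omega) (by omega) (by omega))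
        (braid_s hr1 (r+2) (r+1) (by omega) (by omega) (by omega))
        (braid_s hr1 r (r+1) (by omega) (by omega) (by omega))
        (comm_s (r-1) (r+2) (by omega) (by omega) (by omega))
        (comm_s (r-1) (r+1) (by omega) (by omega) (by omega))
        (comm_s (r+2) r (by omega) (by omega) (by omega))
    · apply sq_ne_one_of_apply hr1 _ ((r+2 : ℕ) : Fin (2*r+1))
      rw [e1, rgen_top (by omega), map_mul, map_mul, map_mul, map_mul,
        phi_S hr1 (r-1), phi_S hr1 (r+2), phi_S hr1 r, phi_S hr1 (r+1)]
      rw [cast_eq (r-1+1) r (by omega) (by omega) (by omega),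
        cast_eq (r+1+1) (r+2) (by omega) (by omega) (by omega),
        cast_eq (r+2+1) (r+3) (by omega) (by omega) (by omega)]
      simp only [Equiv.Perm.mul_apply]
      have g1 : Equiv.swap ((r : ℕ) : Fin (2*r+1)) ((r+1 : ℕ) : Fin (2*r+1))
          ((r+2 : ℕ) : Fin (2*r+1)) = ((r+2 : ℕ) : Fin (2*r+1)) :=
        Equiv.swap_apply_of_ne_of_ne
          (cast_ne (r+2) r (by omega) (by omega) (by omega))
          (cast_ne (r+2) (r+1) (by omega) (by omega) (by omega))
      have g2 : Equiv.swap ((r+1 : ℕ) : Fin (2*r+1)) ((r+2 : ℕ) : Fin (2*r+1))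
          ((r+2 : ℕ) : Fin (2*r+1)) = ((r+1 : ℕ) : Fin (2*r+1)) := Equiv.swap_apply_right _ _
      have g3 : Equiv.swap ((r : ℕ) : Fin (2*r+1)) ((r+1 : ℕ) : Fin (2*r+1))
          ((r+1 : ℕ) : Fin (2*r+1)) = ((r : ℕ) : Fin (2*r+1)) := Equiv.swap_apply_right _ _
      have g4 : Equiv.swap ((r+2 : ℕ) : Fin (2*r+1)) ((r+3 : ℕ) : Fin (2*r+1))
          ((r : ℕ) : Fin (2*r+1)) = ((r : ℕ) : Fin (2*r+1)) :=
        Equiv.swap_apply_of_ne_of_ne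
          (cast_ne r (r+2) (by omega) (by omega) (by omega))
          (cast_ne r (r+3) (by omega) (by omega) (by omega))
      have g5 : Equiv.swap ((r-1 : ℕ) : Fin (2*r+1)) ((r : ℕ) : Fin (2*r+1))
          ((r : ℕ) : Fin (2*r+1)) = ((r-1 : ℕ) : Fin (2*r+1)) := Equiv.swap_apply_right _ _
      have g6 : Equiv.swap ((r : ℕ) : Fin (2*r+1)) ((r+1 : ℕ) : Fin (2*r+1))
          ((r-1 : ℕ) : Fin (2*r+1)) = ((r-1 : ℕ) : Fin (2*r+1)) :=
        Equiv.swap_apply_of_ne_of_ne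
          (cast_ne (r-1) r (by omega) (by omega) (by omega))
          (cast_ne (r-1) (r+1) (by omega) (by omega) (by omega))
      have g7 : Equiv.swap ((r+1 : ℕ) : Fin (2*r+1)) ((r+2 : ℕ) : Fin (2*r+1))
          ((r-1 : ℕ) : Fin (2*r+1)) = ((r-1 : ℕ) : Fin (2*r+1)) :=
        Equiv.swap_apply_of_ne_of_ne
          (cast_ne (r-1) (r+1) (by omega) (by omega) (by omega))
          (cast_ne (r-1) (r+2) (by omega) (by omega) (by omega))
      have g8 : Equiv.swap ((r+2 : ℕ) : Fin (2*r+1)) ((r+3 : ℕ) : Fin (2*r+1))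
          ((r-1 : ℕ) : Fin (2*r+1)) = ((r-1 : ℕ) : Fin (2*r+1)) :=
        Equiv.swap_apply_of_ne_of_ne
          (cast_ne (r-1) (r+2) (by omega) (by omega) (by omega))
          (cast_ne (r-1) (r+3) (by omega) (by omega) (by omega))
      have g9 : Equiv.swap ((r-1 : ℕ) : Fin (2*r+1)) ((r : ℕ) : Fin (2*r+1))
          ((r-1 : ℕ) : Fin (2*r+1)) = ((r : ℕ) : Fin (2*r+1)) := Equiv.swap_apply_left _ _
      rw [g1, g2, g3, g4, g5, g6, g7, g6, g8, g9]
      exact cast_ne r (r+2) (by omega) (by omega) (by omega)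
  -- Part 4 : `r_i r_{i+1}` has order 3
  · intro i hi1 hi2
    have e1 : rgen r i = SS r i * SS r (2*r+1-i) := rgen_mid (by omega) (by omega)
    have e2 : rgen r (i+1) = SS r (i+1) * SS r (2*r+1-(i+1)) := rgen_mid (by omega) (by omega)
    apply orderOf_eq_prime
    · rw [e1, e2, mul_assoc]
      exact ord3 (SS_sq i) (SS_sq (2*r+1-i)) (SS_sq (i+1)) (SS_sq (2*r+1-(i+1)))
        (braid_s hr1 i (i+1) (by omega) (by omega) (by omega))
        (braid_s hr1 (2*r+1-i) (2*r+1-(i+1)) (by omega) (by omega) (by omega))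
        (comm_s i (2*r+1-i) (by omega) (by omega) (by omega))
        (comm_s i (2*r+1-(i+1)) (by omega) (by omega) (by omega))
        (comm_s (2*r+1-i) (i+1) (by omega) (by omega) (by omega))
        (comm_s (i+1) (2*r+1-(i+1)) (by omega) (by omega) (by omega))
    · apply ne_one_of_apply hr1 _ ((i : ℕ) : Fin (2*r+1))
      rw [e1, e2, map_mul, map_mul, map_mul,
        phi_S hr1 i, phi_S hr1 (2*r+1-i), phi_S hr1 (i+1), phi_S hr1 (2*r+1-(i+1))]
      simp only [Equiv.Perm.mul_apply]
      rw [Equiv.swap_apply_of_ne_of_ne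
        (cast_ne i (2*r+1-(i+1)) (by omega) (by omega) (by omega))
        (cast_ne i (2*r+1-(i+1)+1) (by omega) (by omega) (by omega))]
      rw [Equiv.swap_apply_of_ne_of_ne
        (cast_ne i (i+1) (by omega) (by omega) (by omega))
        (cast_ne i (i+1+1) (by omega) (by omega) (by omega))]
      rw [Equiv.swap_apply_of_ne_of_ne
        (cast_ne i (2*r+1-i) (by omega) (by omega) (by omega))
        (cast_ne i (2*r+1-i+1) (by omega) (by omega) (by omega))]
      rw [Equiv.swap_apply_left]
      exact cast_ne (i+1) i (by omega) (by omega) (by omega)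
  -- Part 5 : commutation
  · intro i j hij hjr hge
    by_cases hj : j = r
    · rw [hj, rgen_top (by omega)]
      by_cases hi : i = 0
      · rw [hi, rgen_zero]
        exact ((comm_s' 0 r (by omega) (by omega) (by omega)).mul_right
          (((comm_s' 0 (r+1) (by omega) (by omega) (by omega))).mul_right
            (comm_s' 0 r (by omega) (by omega) (by omega)))).eq
      · rw [rgen_mid hi (by omega)]
        exact (Commute.mul_left
          ((comm_s' i r (by omega) (by omega) (by omega)).mul_right
            ((comm_s' i (r+1) (by omega) (by omega) (by omega)).mul_right
              (comm_s' i r (by omega) (by omega) (by omega))))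
          ((comm_s' (2*r+1-i) r (by omega) (by omega) (by omega)).mul_right
            ((comm_s' (2*r+1-i) (r+1) (by omega) (by omega) (by omega)).mul_right
              (comm_s' (2*r+1-i) r (by omega) (by omega) (by omega))))).eq
    · rw [rgen_mid (by omega) (by omega : j < r)]
      by_cases hi : i = 0
      · rw [hi, rgen_zero]
        exact ((comm_s' 0 j (by omega) (by omega) (by omega)).mul_right
          (comm_s' 0 (2*r+1-j) (by omega) (by omega) (by omega))).eq
      · rw [rgen_mid hi (by omega)]
        exact (Commute.mul_left
          ((comm_s' i j (by omega) (by omega) (by omega)).mul_right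
            (comm_s' i (2*r+1-j) (by omega) (by omega) (by omega)))
          ((comm_s' (2*r+1-i) j (by omega) (by omega) (by omega)).mul_right
            (comm_s' (2*r+1-i) (2*r+1-j) (by omega) (by omega) (by omega)))).eq
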